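/- Let a(t) := 1 − β(1 − e^{−t/(κ w*)}) ∫ e^{−t/(κ w(z))} g₀(z) μ(dz), where g₀ is a probability density, β ∈ (0,1], κ > 0, w : X → (0, ∞) with sup w = w* < ∞, and suppose β g₀(z) ≤ g(z) for a probability density g. Then lim_{t → 0+} a(t)^{1/t} = exp(−β/(κ w*)). -/

import Mathlib

open MeasureTheory Real Filter Set Topology

/-- With `a(t) = 1 - β(1 - e^{-t/(κ w*)}) ∫ e^{-t/(κ w z)} g₀ z μ(dz)`,
we have `a(t)^{1/t} → exp(-β/(κ w*))` as `t → 0+`. -/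
theorem limit_a_pow_one_div {X : Type*} [MeasurableSpace X] (μ : Measure X)
    (g g₀ : X → ℝ) (w : X → ℝ) (β κ wstar : ℝ)
    (hβ0 : 0 < β) (hβ1 : β ≤ 1) (hκ : 0 < κ) (hwstar : 0 < wstar)
    (hg_meas : Measurable g) (hg₀_meas : Measurable g₀) (hw_meas : Measurable w)
    (hg_nonneg : ∀ z, 0 ≤ g z) (hg₀_nonneg : ∀ z, 0 ≤ g₀ z)
    (hg_density : ∫ z, g z ∂μ = 1) (hg₀_density : ∫ z, g₀ z ∂μ = 1)
    (hw_pos : ∀ z, 0 < w z) (hw_le : ∀ z, w z ≤ wstar)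
    (hdoeblin : ∀ z, β * g₀ z ≤ g z) :
    Tendsto
      (fun t : ℝ =>
        (1 - β * (1 - Real.exp (-t / (κ * wstar)))
            * ∫ z, Real.exp (-t / (κ * w z)) * g₀ z ∂μ) ^ (1 / t))
      (nhdsWithin 0 (Ioi 0))
      (nhds (Real.exp (-β / (κ * wstar)))) := by
  have ha0 : (0:ℝ) < κ * wstar := mul_pos hκ hwstar
  have hg₀_int : Integrable g₀ μ := by
    by_contra h
    rw [integral_undef h] at hg₀_density
    norm_num at hg₀_density
  set I : ℝ → ℝ := fun t => ∫ z, Real.exp (-t / (κ * w z)) * g₀ z ∂μ with hIdef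
  have hmeas : ∀ t : ℝ, AEStronglyMeasurable (fun z => Real.exp (-t / (κ * w z)) * g₀ z) μ :=
    fun t => (((measurable_const.div (hw_meas.const_mul κ)).exp).mul hg₀_meas).aestronglyMeasurable
  have hexp_le_one : ∀ t : ℝ, 0 < t → ∀ z, Real.exp (-t / (κ * w z)) ≤ 1 := by
    intro t ht z
    have hwz : 0 < κ * w z := mul_pos hκ (hw_pos z)
    have : -t / (κ * w z) ≤ 0 := div_nonpos_of_nonpos_of_nonneg (by linarith) hwz.le
    calc Real.exp (-t / (κ * w z)) ≤ Real.exp 0 := Real.exp_le_exp.mpr this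
      _ = 1 := Real.exp_zero
  -- dominated convergence : I t → 1
  have hI_tendsto : Tendsto I (𝓝[>] (0:ℝ)) (𝓝 1) := by
    rw [hIdef]
    have := MeasureTheory.tendsto_integral_filter_of_dominated_convergence
      (μ := μ) (l := 𝓝[>] (0:ℝ)) (F := fun t z => Real.exp (-t / (κ * w z)) * g₀ z)
      (f := g₀) (bound := g₀)
      (Filter.Eventually.of_forall hmeas)
      (by
        filter_upwards [self_mem_nhdsWithin] with t ht
        refine Filter.Eventually.of_forall fun z => ?_
        have h1 := hexp_le_one t ht z
        have h2 := Real.exp_nonneg (-t / (κ * w z))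
        have h3 := hg₀_nonneg z
        rw [Real.norm_eq_abs, abs_of_nonneg (mul_nonneg h2 h3)]
        nlinarith)
      hg₀_int
      (by
        refine Filter.Eventually.of_forall fun z => ?_
        have hc : Continuous fun t : ℝ => Real.exp (-t / (κ * w z)) * g₀ z := by
          continuity
        have hle : 𝓝[>] (0:ℝ) ≤ 𝓝 0 := nhdsWithin_le_nhds
        have := (hc.tendsto 0).mono_left hle
        simpa using this)
    simpa [hg₀_density] using this
  have hIle : ∀ t : ℝ, 0 < t → I t ≤ 1 := by
    intro t ht
    have : I t ≤ ∫ z, g₀ z ∂μ := by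
      refine integral_mono_of_nonneg ?_ hg₀_int ?_
      · exact Filter.Eventually.of_forall fun z =>
          mul_nonneg (Real.exp_nonneg _) (hg₀_nonneg z)
      · refine Filter.Eventually.of_forall fun z => ?_
        have h1 := hexp_le_one t ht z
        have h3 := hg₀_nonneg z
        nlinarith
    simpa [hg₀_density] using this
  -- slope limit for 1 - exp(-t/(κ wstar))
  have hd : HasDerivAt (fun t : ℝ => 1 - Real.exp (-t / (κ * wstar))) (1 / (κ * wstar)) 0 := by
    have h1 : HasDerivAt (fun t : ℝ => -t / (κ * wstar)) (-1 / (κ * wstar)) 0 := by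
      simpa [neg_div] using ((hasDerivAt_id (0:ℝ)).neg.div_const (κ * wstar))
    have h2 := h1.exp
    have h3 := h2.const_sub 1
    have h4 : -(Real.exp (-0 / (κ * wstar)) * (-1 / (κ * wstar))) = 1 / (κ * wstar) := by
      field_simp
      simp
    rw [h4] at h3
    exact h3
  have hslope1 : Tendsto (fun t => (1 - Real.exp (-t / (κ * wstar))) / t)
      (𝓝[>] (0:ℝ)) (𝓝 (1 / (κ * wstar))) := by
    have h := hasDerivAt_iff_tendsto_slope.mp hd
    have h2 : Tendsto (slope (fun t : ℝ => 1 - Real.exp (-t / (κ * wstar))) 0)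
        (𝓝[>] (0:ℝ)) (𝓝 (1 / (κ * wstar))) :=
      h.mono_left (nhdsWithin_mono 0 fun x hx => ne_of_gt hx)
    refine Tendsto.congr' ?_ h2
    filter_upwards [self_mem_nhdsWithin] with t ht
    rw [slope_def_field]
    simp [Real.exp_zero]
  set f : ℝ → ℝ := fun t => β * (1 - Real.exp (-t / (κ * wstar))) * I t with hfdef
  have hft : Tendsto (fun t => f t / t) (𝓝[>] (0:ℝ)) (𝓝 (β / (κ * wstar))) := by
    have h := (hslope1.const_mul β).mul hI_tendsto
    have heq : (fun t => β * ((1 - Real.exp (-t / (κ * wstar))) / t) * I t)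
        = fun t => f t / t := by
      funext t; rw [hfdef]; ring
    rw [heq] at h
    have : β * (1 / (κ * wstar)) * 1 = β / (κ * wstar) := by ring
    rwa [this] at h
  have hf0 : Tendsto f (𝓝[>] (0:ℝ)) (𝓝 0) := by
    have hid : Tendsto (fun t : ℝ => t) (𝓝[>] (0:ℝ)) (𝓝 0) :=
      tendsto_id.mono_right nhdsWithin_le_nhds
    have h := hft.mul hid
    refine Tendsto.congr' ?_ (by simpa using h)
    filter_upwards [self_mem_nhdsWithin] with t ht
    have ht0 : (t:ℝ) ≠ 0 := ne_of_gt ht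
    field_simp
  have hfpos : ∀ᶠ t in 𝓝[>] (0:ℝ), 0 < f t := by
    have hIpos : ∀ᶠ t in 𝓝[>] (0:ℝ), 0 < I t :=
      hI_tendsto.eventually (eventually_gt_nhds zero_lt_one)
    filter_upwards [hIpos, self_mem_nhdsWithin] with t hIt ht
    have hlt : Real.exp (-t / (κ * wstar)) < 1 := by
      have : -t / (κ * wstar) < 0 := div_neg_of_neg_of_pos (by linarith [mem_Ioi.mp ht]) ha0
      calc Real.exp (-t / (κ * wstar)) < Real.exp 0 := Real.exp_lt_exp.mpr this
        _ = 1 := Real.exp_zero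
    rw [hfdef]
    have : 0 < 1 - Real.exp (-t / (κ * wstar)) := by linarith
    positivity
  have hflt1 : ∀ᶠ t in 𝓝[>] (0:ℝ), f t < 1 := by
    filter_upwards [self_mem_nhdsWithin] with t ht
    have ht' : (0:ℝ) < t := ht
    have he0 := Real.exp_pos (-t / (κ * wstar))
    have hI1 := hIle t ht'
    have hI0 : 0 ≤ I t := by
      rw [hIdef]
      exact integral_nonneg fun z => mul_nonneg (Real.exp_nonneg _) (hg₀_nonneg z)
    show β * (1 - Real.exp (-t / (κ * wstar))) * I t < 1
    set e := Real.exp (-t / (κ * wstar)) with hedef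
    rcases le_or_gt (1 - e) 0 with h | h
    · nlinarith [mul_nonneg (mul_nonneg hβ0.le (neg_nonneg.mpr h)) hI0]
    · have h5 : β * (1 - e) < 1 := by nlinarith
      have h6 : β * (1 - e) * I t ≤ β * (1 - e) := by
        nlinarith [mul_nonneg (mul_pos hβ0 h).le (sub_nonneg.mpr hI1)]
      linarith
  -- log slope limit
  have hlogslope : Tendsto (slope Real.log 1) (𝓝[≠] (1:ℝ)) (𝓝 1) := by
    simpa using hasDerivAt_iff_tendsto_slope.mp (Real.hasDerivAt_log one_ne_zero)
  have hto1 : Tendsto (fun t => 1 - f t) (𝓝[>] (0:ℝ)) (𝓝[≠] (1:ℝ)) := by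
    rw [tendsto_nhdsWithin_iff]
    constructor
    · simpa using (tendsto_const_nhds.sub hf0)
    · filter_upwards [hfpos] with t ht
      simp only [mem_compl_iff, mem_singleton_iff]
      intro h
      have : f t = 0 := by linarith [sub_eq_zero.mp (by linarith [h] : (1:ℝ) - f t - 1 = 0)]
      linarith
  have hcomp : Tendsto (fun t => slope Real.log 1 (1 - f t)) (𝓝[>] (0:ℝ)) (𝓝 1) :=
    hlogslope.comp hto1
  have hmain : Tendsto (fun t => Real.log (1 - f t) / t) (𝓝[>] (0:ℝ))
      (𝓝 (-(β / (κ * wstar)))) := by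
    have h := hcomp.mul hft.neg
    rw [one_mul] at h
    refine Tendsto.congr' ?_ h
    filter_upwards [hfpos, self_mem_nhdsWithin] with t htf ht
    have ht0 : (t:ℝ) ≠ 0 := ne_of_gt ht
    have hft0 : f t ≠ 0 := ne_of_gt htf
    rw [slope_def_field, Real.log_one]
    field_simp
    rw [show (1 - f t - 1) = -f t by ring, sub_zero, div_neg, neg_neg, mul_div_cancel_left₀ _ hft0]
  have hfinal := (Real.continuous_exp.tendsto _).comp hmain
  have hval : Real.exp (-(β / (κ * wstar))) = Real.exp (-β / (κ * wstar)) := by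
    rw [neg_div]
  refine Tendsto.congr' ?_ (by rw [← hval]; exact hfinal)
  filter_upwards [hfpos, hflt1, self_mem_nhdsWithin] with t h1 h2 ht
  have hpos : 0 < 1 - f t := by linarith
  show Real.exp (Real.log (1 - f t) / t) = (1 - f t) ^ (1 / t)
  rw [Real.rpow_def_of_pos hpos, mul_one_div]
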